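/- Let G be a group generated by a finite symmetric set S, let K ∈ ℕ, α > 0, 0 ≤ ε₁ < 1, let H ⊆ G be a nonempty finite set with |B_K(H)| < (1+α)|H| (H is of type (K,α)), let B ⊆ G be a nonempty finite set, and let I ⊆ G be a finite set such that H·x ⊆ B for every x ∈ I and the family (H·x)_{x∈I} is ε₁-disjoint. Then: (i) |I|·|H| ≤ (1−ε₁)⁻¹|B|; (ii) |⋃_{x∈I} (B_K(H)·x \ H·x)| ≤ α(1−ε₁)⁻¹|B|; (iii) setting B₁ := B \ ⋃_{x∈I} H·x, the set {y ∈ B₁ : B_K·y ⊆ B₁} has cardinality at least |Ω_K(B)| − (|B| − |B₁|) − α(1−ε₁)⁻¹|B|. -/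

import Mathlib

open Pointwise Filter Topology

section Defs

variable {G : Type*} [Group G]

/-- The word ball of radius `k` with respect to the generating set `S`. -/
noncomputable def wball (S : Finset G) (k : ℕ) : Finset G :=
  letI := Classical.decEq G
  (insert (1 : G) S) ^ k

/-- The `k`-neighborhood `B_k(F) = B_k * F` of a finite set `F`. -/
noncomputable def wnbhd (S : Finset G) (k : ℕ) (F : Finset G) : Finset G :=
  letI := Classical.decEq G
  wball S k * F

/-- The `k`-interior `Ω_k(F)` of a finite set `F`. -/
noncomputable def winter (S : Finset G) (k : ℕ) (F : Finset G) : Finset G :=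
  letI := Classical.decEq G
  F.filter fun p => wball S k * {p} ⊆ F

/-- The boundary `∂F` of a finite set `F`. -/
noncomputable def wbdry (S : Finset G) (F : Finset G) : Finset G :=
  letI := Classical.decEq G
  F.filter fun p => ∃ s ∈ S, s * p ∉ F

/-- `S` is a finite symmetric generating set. -/
def IsSymmGen (S : Finset G) : Prop :=
  (∀ s ∈ S, s⁻¹ ∈ S) ∧ Subgroup.closure (S : Set G) = ⊤

/-- A Følner exhaustion of `G`. -/
def IsFolnerExhaustion (S : Finset G) (F : ℕ → Finset G) : Prop :=
  (1 : G) ∈ F 0 ∧ Monotone F ∧ (∀ g : G, ∃ n, g ∈ F n) ∧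
    Filter.Tendsto (fun n => ((wbdry S (F n)).card : ℝ) / ((F n).card : ℝ))
      Filter.atTop (nhds 0)

variable {d : ℕ}

/-- The space of vectors supported in `Fs` such that `A.mulVec f` vanishes on `Fv`. -/
noncomputable def kerOn (A : Matrix (Fin d) (Fin d) (MonoidAlgebra ℂ G))
    (Fs Fv : Finset G) : Submodule ℂ (Fin d → MonoidAlgebra ℂ G) where
  carrier := {f | (∀ i, (f i).coeff.support ⊆ Fs) ∧ ∀ i, ∀ g ∈ Fv, (A.mulVec f i).coeff g = 0}
  zero_mem' := ⟨fun i => by simp, fun i g hg => by simp [Matrix.mulVec_zero]⟩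
  add_mem' := by
    classical
    rintro f g ⟨hf1, hf2⟩ ⟨hg1, hg2⟩
    constructor
    · intro i
      exact Finsupp.support_add.trans (Finset.union_subset (hf1 i) (hg1 i))
    · intro i x hx
      have h : A.mulVec (f + g) = A.mulVec f + A.mulVec g := Matrix.mulVec_add A f g
      rw [h]
      show (A.mulVec f i + A.mulVec g i).coeff x = 0
      rw [MonoidAlgebra.coeff_add, Finsupp.add_apply, hf2 i x hx, hg2 i x hx, add_zero]
  smul_mem' := by
    classical
    rintro c f ⟨hf1, hf2⟩
    constructor
    · intro i
      exact (Finsupp.support_smul).trans (hf1 i)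
    · intro i x hx
      have h : A.mulVec (c • f) = c • A.mulVec f := Matrix.mulVec_smul A c f
      rw [h]
      show (c • A.mulVec f i).coeff x = 0
      rw [MonoidAlgebra.coeff_smul_apply, hf2 i x hx, smul_zero]

/-- The space of vectors supported in `Fs` with `A.mulVec f = 0`. -/
noncomputable def kerAll (A : Matrix (Fin d) (Fin d) (MonoidAlgebra ℂ G))
    (Fs : Finset G) : Submodule ℂ (Fin d → MonoidAlgebra ℂ G) where
  carrier := {f | (∀ i, (f i).coeff.support ⊆ Fs) ∧ A.mulVec f = 0}
  zero_mem' := ⟨fun i => by simp, Matrix.mulVec_zero A⟩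
  add_mem' := by
    classical
    rintro f g ⟨hf1, hf2⟩ ⟨hg1, hg2⟩
    exact ⟨fun i => Finsupp.support_add.trans (Finset.union_subset (hf1 i) (hg1 i)),
      by rw [Matrix.mulVec_add, hf2, hg2, add_zero]⟩
  smul_mem' := by
    classical
    rintro c f ⟨hf1, hf2⟩
    exact ⟨fun i => (Finsupp.support_smul).trans (hf1 i),
      by rw [Matrix.mulVec_smul, hf2, smul_zero]⟩

/-- `V(F)`. -/
noncomputable def VSpace (A : Matrix (Fin d) (Fin d) (MonoidAlgebra ℂ G)) (F : Finset G) :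
    Submodule ℂ (Fin d → MonoidAlgebra ℂ G) :=
  kerOn A F F

/-- `Z(F)`. -/
noncomputable def ZSpace (S : Finset G) (w : ℕ) (A : Matrix (Fin d) (Fin d) (MonoidAlgebra ℂ G))
    (F : Finset G) : Submodule ℂ (Fin d → MonoidAlgebra ℂ G) :=
  kerOn A (wnbhd S w F) F

/-- `W(F)`. -/
noncomputable def WSpace (S : Finset G) (w : ℕ) (A : Matrix (Fin d) (Fin d) (MonoidAlgebra ℂ G))
    (F : Finset G) : Submodule ℂ (Fin d → MonoidAlgebra ℂ G) :=
  kerAll A (winter S w F)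

/-- `A.mulVec` as a `ℂ`-linear map. -/
noncomputable def mulVecL {R : Type*} [Ring R] [Algebra ℂ R] {d : ℕ}
    (A : Matrix (Fin d) (Fin d) R) : (Fin d → R) →ₗ[ℂ] (Fin d → R) where
  toFun := A.mulVec
  map_add' := Matrix.mulVec_add A
  map_smul' c v := Matrix.mulVec_smul A c v

/-- Coordinatewise restriction to `F` (multiplication by the indicator of `F`). -/
noncomputable def restrictTo (d : ℕ) (F : Finset G) :
    (Fin d → MonoidAlgebra ℂ G) →ₗ[ℂ] (Fin d → MonoidAlgebra ℂ G) :=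
  letI := Classical.decEq G
  { toFun := fun f i => MonoidAlgebra.ofCoeff ((f i).coeff.filter (· ∈ F))
    map_add' := fun f g => by
      funext i
      exact congrArg MonoidAlgebra.ofCoeff Finsupp.filter_add
    map_smul' := fun c f => by
      funext i
      exact congrArg MonoidAlgebra.ofCoeff Finsupp.filter_smul }

end Defs

section Tiling

variable {ι α : Type*}

/-- An `ε`-disjoint family of finite sets. -/
def EpsDisjoint (I : Finset ι) (A : ι → Finset α) (ε : ℝ) : Prop :=
  ∃ Ab : ι → Finset α, (∀ i ∈ I, Ab i ⊆ A i) ∧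
    (∀ i ∈ I, ((1 - ε) * (A i).card : ℝ) ≤ ((Ab i).card : ℝ)) ∧
    ∀ i ∈ I, ∀ j ∈ I, i ≠ j → Disjoint (Ab i) (Ab j)

/-- The family `(A i)_{i ∈ I}` `a`-covers `X`. -/
def CoversFrac (I : Finset ι) (A : ι → Finset α) (X : Finset α) (a : ℝ) : Prop :=
  letI := Classical.decEq α
  (a * X.card : ℝ) ≤ ((X ∩ I.biUnion A).card : ℝ)

/-- The family `(A i)_{i ∈ I}` `δ`-evenly covers `X`. -/
def EvenCovering (I : Finset ι) (A : ι → Finset α) (X : Finset α) (δ : ℝ) : Prop :=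
  letI := Classical.decEq α
  ∃ M : ℕ, 1 ≤ M ∧ (∀ p ∈ X, (I.filter fun i => p ∈ A i).card ≤ M) ∧
    ((1 - δ) * M * X.card : ℝ) ≤ ∑ i ∈ I, ((A i).card : ℝ)

/-- The right translate `H·x`. -/
noncomputable def rtrans [Mul α] (H : Finset α) (x : α) : Finset α :=
  letI := Classical.decEq α
  H.image (· * x)

end Tiling

section Supp

variable {G : Type*} [Group G]

/-- Vectors all of whose coordinates are supported in `F`. -/
noncomputable def suppIn (d : ℕ) (F : Finset G) :
    Submodule ℂ (Fin d → MonoidAlgebra ℂ G) where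
  carrier := {f | ∀ i, (f i).coeff.support ⊆ F}
  zero_mem' := fun i => by simp
  add_mem' := by
    classical
    intro f g hf hg i
    exact Finsupp.support_add.trans (Finset.union_subset (hf i) (hg i))
  smul_mem' := fun c f hf i => (Finsupp.support_smul).trans (hf i)

end Supp

section Aux

variable {G : Type*} [Group G]

lemma one_mem_wball (S : Finset G) (K : ℕ) : (1 : G) ∈ wball S K := by
  classical
  unfold wball
  induction K with
  | zero => simp
  | succ k ih =>
      rw [pow_succ]
      have := Finset.mul_mem_mul ih (Finset.mem_insert_self (1 : G) S)
      simpa using this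

lemma wball_inv_mem {S : Finset G} (hS : IsSymmGen S) {K : ℕ} {u : G}
    (hu : u ∈ wball S K) : u⁻¹ ∈ wball S K := by
  classical
  have hA : (insert (1 : G) S)⁻¹ = insert (1 : G) S := by
    ext g
    simp only [Finset.mem_inv', Finset.mem_insert, inv_eq_one]
    constructor
    · rintro (h | h)
      · exact Or.inl h
      · exact Or.inr (by simpa using hS.1 _ h)
    · rintro (h | h)
      · exact Or.inl h
      · exact Or.inr (hS.1 _ h)
  have : (wball S K)⁻¹ = wball S K := by
    unfold wball
    rw [← inv_pow, hA]
  rw [← this]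
  simpa using hu

lemma subset_wnbhd (S : Finset G) (K : ℕ) (H : Finset G) : H ⊆ wnbhd S K H := by
  classical
  intro h hh
  unfold wnbhd
  have := Finset.mul_mem_mul (one_mem_wball S K) hh
  simpa using this

lemma rtrans_card (H : Finset G) (x : G) : (rtrans H x).card = H.card := by
  classical
  unfold rtrans
  exact Finset.card_image_of_injective _ (mul_left_injective x)

lemma rtrans_mono {H H' : Finset G} (h : H ⊆ H') (x : G) : rtrans H x ⊆ rtrans H' x := by
  classical
  unfold rtrans
  exact Finset.image_subset_image h

lemma mem_rtrans {H : Finset G} {x y : G} : y ∈ rtrans H x ↔ ∃ h ∈ H, h * x = y := by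
  classical
  unfold rtrans
  exact Finset.mem_image

end Aux

open scoped Classical in
theorem inductional_step {G : Type*} [Group G] (S : Finset G) (hS : IsSymmGen S)
    (K : ℕ) (α ε₁ : ℝ) (hα : 0 < α) (hε0 : 0 ≤ ε₁) (hε1 : ε₁ < 1)
    (H : Finset G) (hH : H.Nonempty) (htype : ((wnbhd S K H).card : ℝ) < (1 + α) * (H.card : ℝ))
    (B : Finset G) (hB : B.Nonempty) (I : Finset G)
    (htile : ∀ x ∈ I, rtrans H x ⊆ B)
    (hdisj : EpsDisjoint I (fun x => rtrans H x) ε₁) :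
    ((I.card : ℝ) * (H.card : ℝ) ≤ (1 - ε₁)⁻¹ * (B.card : ℝ)) ∧
    (((I.biUnion fun x => rtrans (wnbhd S K H) x \ rtrans H x).card : ℝ)
        ≤ α * (1 - ε₁)⁻¹ * (B.card : ℝ)) ∧
    (((winter S K B).card : ℝ)
        - ((B.card : ℝ) - ((B \ I.biUnion fun x => rtrans H x).card : ℝ))
        - α * (1 - ε₁)⁻¹ * (B.card : ℝ)
      ≤ ((winter S K (B \ I.biUnion fun x => rtrans H x)).card : ℝ)) := by
  classical
  obtain ⟨Ab, hAbsub, hAbcard, hAbdisj⟩ := hdisj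
  have h1e : (0:ℝ) < 1 - ε₁ := by linarith
  have hHpos : (0:ℝ) < H.card := by exact_mod_cast Finset.card_pos.2 hH
  -- sum of Ab cards bounded by |B|
  have hsum : (∑ x ∈ I, ((Ab x).card : ℝ)) ≤ (B.card : ℝ) := by
    have hnat : ∑ x ∈ I, (Ab x).card ≤ B.card := by
      rw [← Finset.card_biUnion (fun i hi j hj hij => hAbdisj i hi j hj hij)]
      apply Finset.card_le_card
      intro y hy
      simp only [Finset.mem_biUnion] at hy
      obtain ⟨x, hx, hy⟩ := hy
      exact htile x hx (hAbsub x hx hy)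
    exact_mod_cast hnat
  have hi0 : (1 - ε₁) * ((I.card : ℝ) * (H.card : ℝ)) ≤ (B.card : ℝ) := by
    calc (1 - ε₁) * ((I.card : ℝ) * (H.card : ℝ))
        = ∑ _x ∈ I, (1 - ε₁) * (H.card : ℝ) := by
          rw [Finset.sum_const, nsmul_eq_mul]; ring
      _ ≤ ∑ x ∈ I, ((Ab x).card : ℝ) := by
          apply Finset.sum_le_sum
          intro x hx
          have := hAbcard x hx
          simpa [rtrans_card] using this
      _ ≤ (B.card : ℝ) := hsum
  have part1 : (I.card : ℝ) * (H.card : ℝ) ≤ (1 - ε₁)⁻¹ * (B.card : ℝ) := by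
    rw [inv_mul_eq_div, le_div_iff₀ h1e]
    linarith [hi0]
  -- part 2
  set D : G → Finset G := fun x => rtrans (wnbhd S K H) x \ rtrans H x with hD
  have hDcard : ∀ x : G, ((D x).card : ℝ) = ((wnbhd S K H).card : ℝ) - (H.card : ℝ) := by
    intro x
    have hsub : rtrans H x ⊆ rtrans (wnbhd S K H) x := rtrans_mono (subset_wnbhd S K H) x
    have : (D x).card = (rtrans (wnbhd S K H) x).card - (rtrans H x).card :=
      Finset.card_sdiff_of_subset hsub
    have hle : (rtrans H x).card ≤ (rtrans (wnbhd S K H) x).card := Finset.card_le_card hsub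
    rw [this, Nat.cast_sub hle, rtrans_card, rtrans_card]
  have part2 : ((I.biUnion D).card : ℝ) ≤ α * (1 - ε₁)⁻¹ * (B.card : ℝ) := by
    have h1 : ((I.biUnion D).card : ℝ) ≤ ∑ x ∈ I, ((D x).card : ℝ) := by
      exact_mod_cast Finset.card_biUnion_le
    have h2 : (∑ x ∈ I, ((D x).card : ℝ)) ≤ (I.card : ℝ) * (α * (H.card : ℝ)) := by
      calc (∑ x ∈ I, ((D x).card : ℝ))
          = (I.card : ℝ) * (((wnbhd S K H).card : ℝ) - (H.card : ℝ)) := by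
            rw [Finset.sum_congr rfl (fun x _ => hDcard x), Finset.sum_const]
            push_cast; ring
        _ ≤ (I.card : ℝ) * (α * (H.card : ℝ)) := by
            apply mul_le_mul_of_nonneg_left _ (by positivity)
            linarith [htype]
    have h3 : (I.card : ℝ) * (α * (H.card : ℝ)) = α * ((I.card : ℝ) * (H.card : ℝ)) := by ring
    calc ((I.biUnion D).card : ℝ) ≤ (I.card : ℝ) * (α * (H.card : ℝ)) := h1.trans h2
      _ = α * ((I.card : ℝ) * (H.card : ℝ)) := h3
      _ ≤ α * ((1 - ε₁)⁻¹ * (B.card : ℝ)) := by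
          exact mul_le_mul_of_nonneg_left part1 hα.le
      _ = α * (1 - ε₁)⁻¹ * (B.card : ℝ) := by ring
  -- part 3
  set U : Finset G := I.biUnion fun x => rtrans H x with hU
  set B₁ : Finset G := B \ U with hB₁
  have hB₁sub : B₁ ⊆ B := Finset.sdiff_subset
  have hkey : winter S K B ⊆ winter S K B₁ ∪ (B \ B₁) ∪ I.biUnion D := by
    intro y hy
    have hyB : y ∈ B := (Finset.mem_filter.1 hy).1
    have hyb : wball S K * {y} ⊆ B := (Finset.mem_filter.1 hy).2
    by_cases hy1 : y ∈ B₁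
    swap
    · exact Finset.mem_union_left _ (Finset.mem_union_right _ (Finset.mem_sdiff.2 ⟨hyB, hy1⟩))
    by_cases hy2 : y ∈ I.biUnion D
    · exact Finset.mem_union_right _ hy2
    apply Finset.mem_union_left
    apply Finset.mem_union_left
    rw [winter, Finset.mem_filter]
    refine ⟨hy1, ?_⟩
    intro z hz
    obtain ⟨u, hu, y', hy', huy⟩ := Finset.mem_mul.1 hz
    rw [Finset.mem_singleton] at hy'
    rw [hy'] at huy
    have hzB : z ∈ B := hyb hz
    rw [hB₁, Finset.mem_sdiff]
    refine ⟨hzB, ?_⟩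
    intro hzU
    rw [hU, Finset.mem_biUnion] at hzU
    obtain ⟨x, hxI, hzx⟩ := hzU
    obtain ⟨h, hhH, hhx⟩ := mem_rtrans.1 hzx
    -- y = u⁻¹ * h * x ∈ wnbhd·x
    have hyD : y ∈ D x := by
      rw [hD, Finset.mem_sdiff]
      constructor
      · rw [mem_rtrans]
        refine ⟨u⁻¹ * h, ?_, ?_⟩
        · unfold wnbhd
          exact Finset.mul_mem_mul (wball_inv_mem hS hu) hhH
        · have : u * y = h * x := by rw [huy, hhx]
          rw [mul_assoc, ← this, inv_mul_cancel_left]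
      · intro hmem
        have : y ∈ U := by
          rw [hU, Finset.mem_biUnion]; exact ⟨x, hxI, hmem⟩
        exact (Finset.mem_sdiff.1 hy1).2 this
    exact hy2 (Finset.mem_biUnion.2 ⟨x, hxI, hyD⟩)
  have hcard3 : ((winter S K B).card : ℝ)
      ≤ ((winter S K B₁).card : ℝ) + ((B \ B₁).card : ℝ) + ((I.biUnion D).card : ℝ) := by
    have h1 : (winter S K B).card ≤ (winter S K B₁ ∪ (B \ B₁) ∪ I.biUnion D).card :=
      Finset.card_le_card hkey
    have h2 : (winter S K B₁ ∪ (B \ B₁) ∪ I.biUnion D).card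
        ≤ (winter S K B₁).card + (B \ B₁).card + (I.biUnion D).card :=
      le_trans (Finset.card_union_le _ _)
        (Nat.add_le_add_right (Finset.card_union_le _ _) _)
    exact_mod_cast h1.trans h2
  have hBB1 : ((B \ B₁).card : ℝ) = (B.card : ℝ) - (B₁.card : ℝ) := by
    rw [Finset.card_sdiff_of_subset hB₁sub, Nat.cast_sub (Finset.card_le_card hB₁sub)]
  exact ⟨part1, part2, by linarith [hcard3, part2, hBB1]⟩
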